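/- Let X = (X_1,…,X_d) be a random vector with joint distribution function F_X(t) = exp(−(Σ_{i=1}^d σ_i^{η/α} t_i^{−1/α})^{α/η}) for t ∈ (0,∞)^d (the logistic model), and let I = {1,…,d} be partitioned into two nonempty blocks I_1, I_2. Then the tail dependence coefficient of (X_{I_1}, X_{I_2}) equals lim_{t→∞} t · P(M(I_1) > 1 − 1/t, M(I_2) > 1 − 1/t) = |I_1|^{α/η} + |I_2|^{α/η} − (|I_1| + |I_2|)^{α/η}. -/

import Mathlib

open MeasureTheory ProbabilityTheory Real Filter Topology
open scoped ProbabilityTheory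

noncomputable section

/-- Marginal Fréchet-type distribution function `F_i(t) = exp(-σ t^(-1/η))` for `t > 0`. -/
def margF (σ η t : ℝ) : ℝ := if 0 < t then Real.exp (-σ * t ^ (-1 / η)) else 0

/-- Joint distribution function of the random vector `X`. -/
def jointF {Ω : Type*} [MeasureSpace Ω] {d : ℕ} (X : Fin d → Ω → ℝ) (t : Fin d → ℝ) : ℝ :=
  (ℙ {ω | ∀ i, X i ω ≤ t i}).toReal

/-- Exponent function `ℓ(t) = -ln F_X(t)`. -/
def expo {Ω : Type*} [MeasureSpace Ω] {d : ℕ} (X : Fin d → Ω → ℝ) (t : Fin d → ℝ) : ℝ :=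
  -Real.log (jointF X t)

/-- Block maximum `M(I_j) = max_{i ∈ I_j} F_i(X_i)`, where `I_j = {i | B i = j}`. -/
def blockMax {Ω : Type*} [MeasureSpace Ω] {d p : ℕ} (B : Fin d → Fin p) (σ : Fin d → ℝ)
    (η : ℝ) (X : Fin d → Ω → ℝ) (j : Fin p) (ω : Ω) : ℝ :=
  sSup ((fun i => margF (σ i) η (X i ω)) '' {i | B i = j})

/-- Extremal dependence function
`ε(λ₁,…,λ_p) = E(max_j M(I_j)^(λ_j)) / (1 - E(max_j M(I_j)^(λ_j)))`. -/
def epsFun {Ω : Type*} [MeasureSpace Ω] {d p : ℕ} (B : Fin d → Fin p) (σ : Fin d → ℝ)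
    (η : ℝ) (X : Fin d → Ω → ℝ) (l : Fin p → ℝ) : ℝ :=
  (∫ ω, ⨆ j, blockMax B σ η X j ω ^ l j ∂ℙ) /
    (1 - ∫ ω, ⨆ j, blockMax B σ η X j ω ^ l j ∂ℙ)

/-- Single-block extremal dependence function `ε_{I_j}(λ)`. -/
def epsBlock {Ω : Type*} [MeasureSpace Ω] {d p : ℕ} (B : Fin d → Fin p) (σ : Fin d → ℝ)
    (η : ℝ) (X : Fin d → Ω → ℝ) (j : Fin p) (l : ℝ) : ℝ :=
  (∫ ω, blockMax B σ η X j ω ^ l ∂ℙ) / (1 - ∫ ω, blockMax B σ η X j ω ^ l ∂ℙ)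

-- AUX BLOCK (inserted above theorem)
lemma margF_le_iff' {σ η u : ℝ} (hσ : 0 < σ) (hη : 0 < η) (hu0 : 0 < u) (hu1 : u < 1)
    (t : ℝ) : margF σ η t ≤ u ↔ t ≤ (σ / (-Real.log u)) ^ η := by
  have hL : 0 < -Real.log u := by have := Real.log_neg hu0 hu1; linarith
  have hx : 0 < σ / (-Real.log u) := div_pos hσ hL
  have hs : 0 < (σ / (-Real.log u)) ^ η := Real.rpow_pos_of_pos hx η
  unfold margF
  by_cases ht : 0 < t
  · simp only [ht, if_true]
    rw [← Real.le_log_iff_exp_le hu0]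
    have h1 : -σ * t ^ (-1 / η) ≤ Real.log u ↔ -Real.log u / σ ≤ t ^ (-1 / η) := by
      rw [div_le_iff₀ hσ]
      have hp : 0 < t ^ (-1 / η) := Real.rpow_pos_of_pos ht _
      constructor <;> intro h <;> nlinarith
    have h2 : t ^ (-1 / η) = (t ^ (1 / η))⁻¹ := by
      rw [neg_div, Real.rpow_neg ht.le]
    have htp : 0 < t ^ (1 / η) := Real.rpow_pos_of_pos ht (1 / η)
    rw [h1, h2, le_inv_comm₀ (div_pos hL hσ) htp, inv_div,
      ← Real.rpow_le_rpow_iff htp.le hx.le hη, ← Real.rpow_mul ht.le,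
      one_div_mul_cancel hη.ne', Real.rpow_one]
  · simp only [ht, if_false]
    constructor
    · intro _; exact le_trans (le_of_not_gt ht) hs.le
    · intro _; exact hu0.le

lemma term_eq' {σ α η u : ℝ} (hσ : 0 < σ) (hα : 0 < α) (hη : 0 < η) (hu0 : 0 < u)
    (hu1 : u < 1) :
    σ ^ (η / α) * ((σ / (-Real.log u)) ^ η) ^ (-1 / α) = (-Real.log u) ^ (η / α) := by
  have hL : 0 < -Real.log u := by have := Real.log_neg hu0 hu1; linarith
  have hx : 0 < σ / (-Real.log u) := div_pos hσ hL
  rw [← Real.rpow_mul hx.le, Real.div_rpow hσ.le hL.le]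
  have he : η * (-1 / α) = -(η / α) := by field_simp
  rw [he, Real.rpow_neg (by positivity), Real.rpow_neg hL.le]
  have h1 : (0:ℝ) < σ ^ (η / α) := Real.rpow_pos_of_pos hσ _
  have h2 : (0:ℝ) < (-Real.log u) ^ (η / α) := Real.rpow_pos_of_pos hL _
  field_simp

lemma tendsto_one_sub_rpow (c : ℝ) :
    Tendsto (fun t : ℝ => t * (1 - (1 - 1 / t) ^ c)) atTop (𝓝 c) := by
  have hd : HasDerivAt (fun x : ℝ => (1 - x) ^ c) (-c) 0 := by
    have h1 : HasDerivAt (fun x : ℝ => 1 - x) (-1) 0 := (hasDerivAt_id 0).const_sub 1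
    have h2 := (Real.hasDerivAt_rpow_const (x := (1:ℝ) - 0) (p := c)
      (Or.inl (by norm_num))).comp 0 h1
    simpa [Function.comp_def] using h2
  rw [hasDerivAt_iff_tendsto_slope] at hd
  have h3 : Tendsto (fun t : ℝ => 1 / t) atTop (𝓝[≠] (0:ℝ)) := by
    rw [tendsto_nhdsWithin_iff]
    constructor
    · simpa [one_div] using (tendsto_inv_atTop_zero (𝕜 := ℝ))
    · filter_upwards [eventually_gt_atTop (0:ℝ)] with t ht
      simp [one_div, ht.ne']
  have h4 := (hd.comp h3).neg
  rw [neg_neg] at h4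
  apply h4.congr'
  filter_upwards [eventually_gt_atTop (0:ℝ)] with t ht
  have htne : t ≠ 0 := ht.ne'
  simp only [Function.comp_apply, slope_def_field, sub_zero, Real.one_rpow]
  field_simp
  ring

lemma prob_box {Ω : Type*} [MeasureSpace Ω] [IsProbabilityMeasure (ℙ : Measure Ω)]
    {d : ℕ} (X : Fin d → Ω → ℝ) (σ : Fin d → ℝ) (hσ : ∀ i, 0 < σ i)
    {α η : ℝ} (hα : 0 < α) (hη : 0 < η)
    (hjoint : ∀ t : Fin d → ℝ, (∀ i, 0 < t i) →
      ℙ {ω | ∀ i, X i ω ≤ t i} =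
        ENNReal.ofReal (Real.exp (-((∑ i, σ i ^ (η / α) * t i ^ (-1 / α)) ^ (α / η)))))
    (S : Finset (Fin d)) (hS : S.Nonempty) {u : ℝ} (hu0 : 0 < u) (hu1 : u < 1) :
    ℙ {ω | ∀ i ∈ S, X i ω ≤ (σ i / (-Real.log u)) ^ η}
      = ENNReal.ofReal (u ^ ((S.card : ℝ) ^ (α / η))) := by
  have hL : 0 < -Real.log u := by have := Real.log_neg hu0 hu1; linarith
  set s : Fin d → ℝ := fun i => (σ i / (-Real.log u)) ^ η with hs
  have hspos : ∀ i, 0 < s i := fun i => Real.rpow_pos_of_pos (div_pos (hσ i) hL) η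
  set T : ℕ → Fin d → ℝ := fun n i => if i ∈ S then s i else s i + n with hT
  have hTpos : ∀ n i, 0 < T n i := by
    intro n i
    by_cases h : i ∈ S <;> simp only [hT, h, if_true, if_false]
    · exact hspos i
    · have : (0:ℝ) ≤ n := Nat.cast_nonneg n
      linarith [hspos i]
  have hmono : Monotone (fun n => {ω | ∀ i, X i ω ≤ T n i}) := by
    intro m n hmn ω hω i
    by_cases h : i ∈ S
    · simpa [hT, h] using hω i
    · have := hω i
      simp only [hT, h, if_false] at this ⊢
      have : X i ω ≤ s i + m := this
      have hc : (m:ℝ) ≤ n := Nat.cast_le.mpr hmn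
      linarith
  have hunion : (⋃ n, {ω | ∀ i, X i ω ≤ T n i}) = {ω | ∀ i ∈ S, X i ω ≤ s i} := by
    ext ω
    simp only [Set.mem_iUnion, Set.mem_setOf_eq]
    constructor
    · rintro ⟨n, hn⟩ i hi
      simpa [hT, hi] using hn i
    · intro h
      have hne : (Finset.univ : Finset (Fin d)).Nonempty := ⟨hS.choose, Finset.mem_univ _⟩
      obtain ⟨n, hn⟩ := exists_nat_ge (Finset.univ.sup' hne fun i => X i ω - s i)
      refine ⟨n, fun i => ?_⟩
      by_cases hi : i ∈ S
      · simpa [hT, hi] using h i hi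
      · simp only [hT, hi, if_false]
        have : X i ω - s i ≤ (n:ℝ) :=
          le_trans (Finset.le_sup' (fun i => X i ω - s i) (Finset.mem_univ i)) hn
        linarith
  have h1 := tendsto_measure_iUnion_atTop (μ := (ℙ : Measure Ω)) hmono
  rw [hunion] at h1
  have hterm : ∀ n, ℙ {ω | ∀ i, X i ω ≤ T n i}
      = ENNReal.ofReal (Real.exp (-((∑ i, σ i ^ (η / α) * (T n i) ^ (-1 / α)) ^ (α / η)))) :=
    fun n => hjoint _ (hTpos n)
  set Lp : ℝ := (-Real.log u) ^ (η / α) with hLp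
  have hLppos : 0 < Lp := Real.rpow_pos_of_pos hL _
  have hsum : Tendsto (fun n : ℕ => ∑ i, σ i ^ (η / α) * (T n i) ^ (-1 / α)) atTop
      (𝓝 ((S.card : ℝ) * Lp)) := by
    have hsplit : ∀ n : ℕ, ∑ i, σ i ^ (η / α) * (T n i) ^ (-1 / α)
        = (S.card : ℝ) * Lp + ∑ i ∈ Sᶜ, σ i ^ (η / α) * (s i + n) ^ (-1 / α) := by
      intro n
      rw [← Finset.sum_add_sum_compl S]
      congr 1
      · rw [Finset.sum_congr rfl (fun i hi => ?_), Finset.sum_const, nsmul_eq_mul]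
        show σ i ^ (η / α) * (T n i) ^ (-1 / α) = Lp
        rw [hT]; simp only [hi, if_true]
        exact term_eq' (hσ i) hα hη hu0 hu1
      · refine Finset.sum_congr rfl fun i hi => ?_
        rw [Finset.mem_compl] at hi
        rw [hT]; simp [hi]
    simp only [hsplit]
    have h0 : Tendsto (fun n : ℕ => ∑ i ∈ Sᶜ, σ i ^ (η / α) * (s i + n) ^ (-1 / α)) atTop
        (𝓝 0) := by
      have : Tendsto (fun n : ℕ => ∑ i ∈ Sᶜ, σ i ^ (η / α) * (s i + n) ^ (-1 / α)) atTop
          (𝓝 (∑ i ∈ Sᶜ, (0:ℝ))) := by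
        refine tendsto_finset_sum _ fun i _ => ?_
        have hb : Tendsto (fun n : ℕ => s i + (n:ℝ)) atTop atTop :=
          tendsto_atTop_add_const_left _ _ tendsto_natCast_atTop_atTop
        have hr : Tendsto (fun x : ℝ => x ^ (-(1/α))) atTop (𝓝 0) :=
          tendsto_rpow_neg_atTop (by positivity)
        have := (hr.comp hb).const_mul (σ i ^ (η / α))
        simpa [mul_zero, neg_div] using this
      simpa using this
    simpa using (tendsto_const_nhds.add h0)
  have hcont : ContinuousAt (fun x : ℝ => ENNReal.ofReal (Real.exp (-(x ^ (α / η)))))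
      ((S.card : ℝ) * Lp) := by
    have hpt : ((S.card : ℝ) * Lp) ≠ 0 := by
      have : (0:ℝ) < S.card := by exact_mod_cast Finset.card_pos.mpr hS
      positivity
    exact ENNReal.continuous_ofReal.continuousAt.comp
      ((Real.continuous_exp.continuousAt).comp
        ((continuous_neg.continuousAt).comp
          (Real.continuousAt_rpow_const _ _ (Or.inl hpt))))
  have h2 := (hcont.tendsto).comp hsum
  simp only [Function.comp_def] at h2
  have h1' := h1.congr hterm
  have := tendsto_nhds_unique h1' h2
  rw [this]
  congr 1
  have hc : (0:ℝ) ≤ (S.card : ℝ) := Nat.cast_nonneg _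
  rw [Real.mul_rpow hc hLppos.le, hLp, ← Real.rpow_mul hL.le,
    div_mul_div_comm, mul_comm η α, div_self (by positivity), Real.rpow_one]
  rw [Real.rpow_def_of_pos hu0]
  ring_nf

theorem statement14
    {Ω : Type*} [MeasureSpace Ω] [IsProbabilityMeasure (ℙ : Measure Ω)]
    {d : ℕ} (hd : 0 < d)
    (X : Fin d → Ω → ℝ) (hX : ∀ i, Measurable (X i))
    (σ : Fin d → ℝ) (hσ : ∀ i, 0 < σ i)
    (α η : ℝ) (hα : 0 < α) (hαη : α ≤ η) (hη1 : η ≤ 1)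
    (hjoint : ∀ t : Fin d → ℝ, (∀ i, 0 < t i) →
      ℙ {ω | ∀ i, X i ω ≤ t i} =
        ENNReal.ofReal (Real.exp (-((∑ i, σ i ^ (η / α) * t i ^ (-1 / α)) ^ (α / η)))))
    (B : Fin d → Fin 2) (hB : Function.Surjective B) :
    Tendsto (fun t : ℝ => t * (ℙ {ω | 1 - 1 / t < blockMax B σ η X 0 ω ∧
        1 - 1 / t < blockMax B σ η X 1 ω}).toReal) atTop
      (𝓝 (((Finset.univ.filter fun i => B i = 0).card : ℝ) ^ (α / η)
          + ((Finset.univ.filter fun i => B i = 1).card : ℝ) ^ (α / η)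
          - (((Finset.univ.filter fun i => B i = 0).card : ℝ)
            + ((Finset.univ.filter fun i => B i = 1).card : ℝ)) ^ (α / η))) := by

  have hη : 0 < η := lt_of_lt_of_le hα hαη
  have hb2 : ∀ b : Fin 2, b = 0 ∨ b = 1 := by decide
  have hcard : ((Finset.univ : Finset (Fin d)).card : ℝ)
      = ((Finset.univ.filter fun i => B i = 0).card : ℝ)
        + ((Finset.univ.filter fun i => B i = 1).card : ℝ) := by
    have hb : ∀ b : Fin 2, b = 1 ↔ ¬ b = 0 := by decide
    have h2 : (Finset.univ.filter fun i => B i = 1)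
        = Finset.univ.filter (fun i => ¬ B i = 0) :=
      Finset.filter_congr fun i _ => hb (B i)
    rw [h2]
    exact_mod_cast (Finset.card_filter_add_card_filter_not
      (s := (Finset.univ : Finset (Fin d))) (p := fun i => B i = 0)).symm
  have hblock : ∀ u : ℝ, 0 < u → u < 1 → ∀ j : Fin 2, ∀ ω : Ω,
      (blockMax B σ η X j ω ≤ u ↔
        ∀ i ∈ Finset.univ.filter (fun i => B i = j),
          X i ω ≤ (σ i / (-Real.log u)) ^ η) := by
    intro u hu0 hu1 j ω
    obtain ⟨i0, hi0⟩ := hB j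
    have hne : ((fun i => margF (σ i) η (X i ω)) '' {i | B i = j}).Nonempty :=
      ⟨_, Set.mem_image_of_mem _ (show i0 ∈ {i | B i = j} from hi0)⟩
    have hbdd : BddAbove ((fun i => margF (σ i) η (X i ω)) '' {i | B i = j}) :=
      (Set.toFinite _).image _ |>.bddAbove
    rw [blockMax, csSup_le_iff hbdd hne]
    simp only [Set.forall_mem_image, Set.mem_setOf_eq, Finset.mem_filter,
      Finset.mem_univ, true_and]
    exact forall_congr' fun i => imp_congr_right fun _ =>
      margF_le_iff' (hσ i) hη hu0 hu1 _
  have hev : ∀ᶠ t : ℝ in atTop,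
      t * (ℙ {ω | 1 - 1 / t < blockMax B σ η X 0 ω ∧
          1 - 1 / t < blockMax B σ η X 1 ω}).toReal
      = t * (1 - (1 - 1 / t) ^ (((Finset.univ.filter fun i => B i = 0).card : ℝ) ^ (α / η)))
        + t * (1 - (1 - 1 / t) ^ (((Finset.univ.filter fun i => B i = 1).card : ℝ) ^ (α / η)))
        - t * (1 - (1 - 1 / t) ^ ((((Finset.univ.filter fun i => B i = 0).card : ℝ)
            + ((Finset.univ.filter fun i => B i = 1).card : ℝ)) ^ (α / η))) := by
    filter_upwards [eventually_gt_atTop (1:ℝ)] with t ht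
    have ht0 : (0:ℝ) < t := lt_trans one_pos ht
    set u : ℝ := 1 - 1 / t with hu
    have h1t : 1 / t < 1 := by rw [div_lt_one ht0]; exact ht
    have h0t : 0 < 1 / t := by positivity
    have hu0 : 0 < u := by rw [hu]; linarith
    have hu1 : u < 1 := by rw [hu]; linarith
    have hAeq : ∀ j : Fin 2, {ω | blockMax B σ η X j ω ≤ u}
        = {ω | ∀ i ∈ Finset.univ.filter (fun i => B i = j),
            X i ω ≤ (σ i / (-Real.log u)) ^ η} :=
      fun j => Set.ext fun ω => hblock u hu0 hu1 j ω
    have hAmeas : ∀ j : Fin 2, MeasurableSet {ω | blockMax B σ η X j ω ≤ u} := by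
      intro j
      rw [hAeq j]
      have he : {ω | ∀ i ∈ Finset.univ.filter (fun i => B i = j),
            X i ω ≤ (σ i / (-Real.log u)) ^ η}
          = ⋂ i ∈ Finset.univ.filter (fun i => B i = j),
              {ω | X i ω ≤ (σ i / (-Real.log u)) ^ η} := by
        ext ω; simp
      rw [he]
      exact MeasurableSet.biInter (Set.to_countable _)
        fun i _ => measurableSet_le (hX i) measurable_const
    have hAprob : ∀ j : Fin 2, ℙ {ω | blockMax B σ η X j ω ≤ u} = ENNReal.ofReal
        (u ^ (((Finset.univ.filter fun i => B i = j).card : ℝ) ^ (α / η))) := by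
      intro j
      obtain ⟨i0, hi0⟩ := hB j
      rw [hAeq j]
      exact prob_box X σ hσ hα hη hjoint _ ⟨i0, by simp [hi0]⟩ hu0 hu1
    have hIprob : ℙ ({ω | blockMax B σ η X 0 ω ≤ u} ∩ {ω | blockMax B σ η X 1 ω ≤ u})
        = ENNReal.ofReal (u ^ ((((Finset.univ.filter fun i => B i = 0).card : ℝ)
            + ((Finset.univ.filter fun i => B i = 1).card : ℝ)) ^ (α / η))) := by
      have hInt : {ω | blockMax B σ η X 0 ω ≤ u} ∩ {ω | blockMax B σ η X 1 ω ≤ u}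
          = {ω | ∀ i ∈ (Finset.univ : Finset (Fin d)),
              X i ω ≤ (σ i / (-Real.log u)) ^ η} := by
        rw [hAeq 0, hAeq 1]
        ext ω
        simp only [Set.mem_inter_iff, Set.mem_setOf_eq, Finset.mem_filter,
          Finset.mem_univ, true_and, true_implies]
        constructor
        · rintro ⟨h0, h1⟩ i
          rcases hb2 (B i) with h | h
          · exact h0 i h
          · exact h1 i h
        · exact fun h => ⟨fun i _ => h i, fun i _ => h i⟩
      rw [hInt, prob_box X σ hσ hα hη hjoint Finset.univ
        ⟨(hB 0).choose, Finset.mem_univ _⟩ hu0 hu1, hcard]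
    have hT : {ω | u < blockMax B σ η X 0 ω ∧ u < blockMax B σ η X 1 ω}
        = ({ω | blockMax B σ η X 0 ω ≤ u} ∪ {ω | blockMax B σ η X 1 ω ≤ u})ᶜ := by
      ext ω
      simp only [Set.mem_setOf_eq, Set.mem_compl_iff, Set.mem_union, not_or, not_le]
    set a : ℝ := u ^ (((Finset.univ.filter fun i => B i = 0).card : ℝ) ^ (α / η)) with ha
    set b : ℝ := u ^ (((Finset.univ.filter fun i => B i = 1).card : ℝ) ^ (α / η)) with hbb
    set cI : ℝ := u ^ ((((Finset.univ.filter fun i => B i = 0).card : ℝ)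
        + ((Finset.univ.filter fun i => B i = 1).card : ℝ)) ^ (α / η)) with hcI
    have ha0 : 0 ≤ a := Real.rpow_nonneg hu0.le _
    have hb0 : 0 ≤ b := Real.rpow_nonneg hu0.le _
    have hcI0 : 0 ≤ cI := Real.rpow_nonneg hu0.le _
    have hcIa : cI ≤ a := by
      rw [ha, hcI]
      apply Real.rpow_le_rpow_of_exponent_ge hu0 hu1.le
      apply Real.rpow_le_rpow (Nat.cast_nonneg _) _ (by positivity)
      have : (0:ℝ) ≤ ((Finset.univ.filter fun i => B i = 1).card : ℝ) := Nat.cast_nonneg _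
      linarith
    have hUnion : ℙ ({ω | blockMax B σ η X 0 ω ≤ u} ∪ {ω | blockMax B σ η X 1 ω ≤ u})
        = ENNReal.ofReal (a + b - cI) := by
      have h1 := measure_union_add_inter (μ := (ℙ : Measure Ω))
        {ω | blockMax B σ η X 0 ω ≤ u} (hAmeas 1)
      have h2 := ENNReal.eq_sub_of_add_eq (measure_ne_top _ _) h1
      rw [h2, hAprob 0, hAprob 1, hIprob,
        ← ENNReal.ofReal_add ha0 hb0, ← ENNReal.ofReal_sub _ hcI0]
    have hle1 : ENNReal.ofReal (a + b - cI) ≤ 1 := hUnion ▸ prob_le_one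
    have habc0 : 0 ≤ a + b - cI := by linarith
    have habc1 : a + b - cI ≤ 1 := by rwa [ENNReal.ofReal_le_one] at hle1
    rw [hT, prob_compl_eq_one_sub ((hAmeas 0).union (hAmeas 1)), hUnion,
      ENNReal.toReal_sub_of_le hle1 ENNReal.one_ne_top, ENNReal.toReal_one,
      ENNReal.toReal_ofReal habc0]
    ring
  have hlim := ((tendsto_one_sub_rpow
      ((((Finset.univ.filter fun i => B i = 0).card : ℝ)) ^ (α / η))).add
    (tendsto_one_sub_rpow
      ((((Finset.univ.filter fun i => B i = 1).card : ℝ)) ^ (α / η)))).sub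
    (tendsto_one_sub_rpow
      (((((Finset.univ.filter fun i => B i = 0).card : ℝ))
        + (((Finset.univ.filter fun i => B i = 1).card : ℝ))) ^ (α / η)))
  exact Tendsto.congr' (Filter.EventuallyEq.symm hev) hlim
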